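/- Let U ⊆ ℝ² be an open set, let d₁, d₂ : U → ℝ be twice continuously differentiable functions that vanish nowhere, set l = d₁ + d₂, and suppose ∂l/∂x(x,y) = coth(d₁(x,y)) and ∂l/∂y(x,y) = coth(d₂(x,y)) for all (x,y) ∈ U. Then for all (x,y) ∈ U, (1/sinh²(d₁(x,y)))·∂d₁/∂y(x,y) = (1/sinh²(d₂(x,y)))·∂d₂/∂x(x,y). -/

import Mathlib

/-- The hyperbolic cotangent, `coth t = cosh t / sinh t`. -/
noncomputable def coth (t : ℝ) : ℝ := Real.cosh t / Real.sinh t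

lemma hasDerivAt_coth {t : ℝ} (ht : t ≠ 0) :
    HasDerivAt coth (-(1 / Real.sinh t ^ 2)) t := by
  have hs : Real.sinh t ≠ 0 := Real.sinh_ne_zero.2 ht
  have h : HasDerivAt coth _ t := (Real.hasDerivAt_cosh t).div (Real.hasDerivAt_sinh t) hs
  convert h using 1
  field_simp
  rw [← Real.cosh_sq_sub_sinh_sq t]
  ring

/-- For a discrete conformal structure on an edge, the symmetry of mixed second partials of
`l = d₁ + d₂` yields `(1/sinh² d₁) ∂d₁/∂y = (1/sinh² d₂) ∂d₂/∂x`. -/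
theorem mixed_partial_symmetry (U : Set (ℝ × ℝ)) (hU : IsOpen U)
    (d₁ d₂ : ℝ × ℝ → ℝ)
    (hd₁C2 : ContDiffOn ℝ 2 d₁ U) (hd₂C2 : ContDiffOn ℝ 2 d₂ U)
    (hd₁ne : ∀ p ∈ U, d₁ p ≠ 0) (hd₂ne : ∀ p ∈ U, d₂ p ≠ 0)
    (l : ℝ × ℝ → ℝ) (hl : l = d₁ + d₂)
    (hlx : ∀ p ∈ U, deriv (fun t => l (t, p.2)) p.1 = coth (d₁ p))
    (hly : ∀ p ∈ U, deriv (fun s => l (p.1, s)) p.2 = coth (d₂ p)) :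
    ∀ p ∈ U,
      (1 / Real.sinh (d₁ p) ^ 2) * deriv (fun s => d₁ (p.1, s)) p.2 =
        (1 / Real.sinh (d₂ p) ^ 2) * deriv (fun t => d₂ (t, p.2)) p.1 := by
  intro p hp
  have hlC2 : ContDiffOn ℝ 2 l U := by rw [hl]; exact hd₁C2.add hd₂C2
  -- membership neighborhood
  have hUnhds : U ∈ nhds p := hU.mem_nhds hp
  -- differentiability facts at points of U
  have hldiff : ∀ q ∈ U, DifferentiableAt ℝ l q := fun q hq =>
    ((hlC2.contDiffAt (hU.mem_nhds hq)).differentiableAt (by norm_num))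
  have hd₁diff : DifferentiableAt ℝ d₁ p :=
    (hd₁C2.contDiffAt hUnhds).differentiableAt (by norm_num)
  have hd₂diff : DifferentiableAt ℝ d₂ p :=
    (hd₂C2.contDiffAt hUnhds).differentiableAt (by norm_num)
  -- fderiv l is differentiable at p
  have hf'C1 : ContDiffOn ℝ 1 (fderiv ℝ l) U :=
    hlC2.fderiv_of_isOpen hU (by norm_num)
  have hf'diff : DifferentiableAt ℝ (fderiv ℝ l) p :=
    (hf'C1.contDiffAt hUnhds).differentiableAt (by norm_num)
  set f'' := fderiv ℝ (fderiv ℝ l) p with hf''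
  have hf''at : HasFDerivAt (fderiv ℝ l) f'' p := hf'diff.hasFDerivAt
  -- symmetry of second derivative
  have hsymm : ∀ v w, f'' v w = f'' w v := by
    intro v w
    have hev : ∀ᶠ y in nhds p, HasFDerivAt l (fderiv ℝ l y) y := by
      filter_upwards [hUnhds] with q hq using (hldiff q hq).hasFDerivAt
    exact second_derivative_symmetric_of_eventually hev hf''at v w
  -- curves
  have hcurve_x : ∀ q : ℝ × ℝ, HasDerivAt (fun t : ℝ => (t, q.2)) ((1 : ℝ), (0 : ℝ)) q.1 :=
    fun q => (hasDerivAt_id _).prodMk (hasDerivAt_const _ _)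
  have hcurve_y : ∀ q : ℝ × ℝ, HasDerivAt (fun s : ℝ => (q.1, s)) ((0 : ℝ), (1 : ℝ)) q.2 :=
    fun q => (hasDerivAt_const _ _).prodMk (hasDerivAt_id _)
  -- A q = fderiv l q (1,0) equals coth (d₁ q) on U; B similarly
  have hA : ∀ q ∈ U, fderiv ℝ l q (1, 0) = coth (d₁ q) := by
    intro q hq
    have h1 : HasDerivAt (fun t => l (t, q.2)) (fderiv ℝ l q (1, 0)) q.1 :=
      (hldiff q hq).hasFDerivAt.comp_hasDerivAt _ (hcurve_x q)
    rw [← h1.deriv]; exact hlx q hq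
  have hB : ∀ q ∈ U, fderiv ℝ l q (0, 1) = coth (d₂ q) := by
    intro q hq
    have h1 : HasDerivAt (fun s => l (q.1, s)) (fderiv ℝ l q (0, 1)) q.2 :=
      (hldiff q hq).hasFDerivAt.comp_hasDerivAt _ (hcurve_y q)
    rw [← h1.deriv]; exact hly q hq
  -- derivative of q ↦ fderiv l q v in a direction
  have happ : ∀ v w : ℝ × ℝ, HasFDerivAt (fun q => fderiv ℝ l q v)
      ((ContinuousLinearMap.apply ℝ ℝ v).comp f'') p :=
    fun v w => (ContinuousLinearMap.apply ℝ ℝ v).hasFDerivAt.comp p hf''at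
  -- left side: derivative in y of A
  have hAy : HasDerivAt (fun s => fderiv ℝ l (p.1, s) (1, 0)) (f'' (0, 1) (1, 0)) p.2 := by
    have := (happ (1, 0) (0, 1)).comp_hasDerivAt _ (hcurve_y p)
    simpa [Function.comp_def] using this
  have hBx : HasDerivAt (fun t => fderiv ℝ l (t, p.2) (0, 1)) (f'' (1, 0) (0, 1)) p.1 := by
    have := (happ (0, 1) (1, 0)).comp_hasDerivAt _ (hcurve_x p)
    simpa [Function.comp_def] using this
  -- derivative of coth ∘ d₁ along y
  have hd₁y : HasDerivAt (fun s => d₁ (p.1, s)) (fderiv ℝ d₁ p (0, 1)) p.2 := by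
    have := hd₁diff.hasFDerivAt.comp_hasDerivAt _ (hcurve_y p)
    simpa [Function.comp_def] using this
  have hd₂x : HasDerivAt (fun t => d₂ (t, p.2)) (fderiv ℝ d₂ p (1, 0)) p.1 := by
    have := hd₂diff.hasFDerivAt.comp_hasDerivAt _ (hcurve_x p)
    simpa [Function.comp_def] using this
  have hcd₁ : HasDerivAt (fun s => coth (d₁ (p.1, s)))
      (-(1 / Real.sinh (d₁ p) ^ 2) * fderiv ℝ d₁ p (0, 1)) p.2 := by
    have h := (hasDerivAt_coth (hd₁ne p hp)).comp p.2 hd₁y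
    simpa [Function.comp_def] using h
  have hcd₂ : HasDerivAt (fun t => coth (d₂ (t, p.2)))
      (-(1 / Real.sinh (d₂ p) ^ 2) * fderiv ℝ d₂ p (1, 0)) p.1 := by
    have h := (hasDerivAt_coth (hd₂ne p hp)).comp p.1 hd₂x
    simpa [Function.comp_def] using h
  -- A agrees with coth∘d₁ near p along the vertical line
  have hAeq : f'' (0, 1) (1, 0) = -(1 / Real.sinh (d₁ p) ^ 2) * fderiv ℝ d₁ p (0, 1) := by
    have hev : ∀ᶠ s in nhds p.2, fderiv ℝ l (p.1, s) (1, 0) = coth (d₁ (p.1, s)) := by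
      have hc : Continuous (fun s : ℝ => (p.1, s)) := continuous_const.prodMk continuous_id
      filter_upwards [hc.continuousAt.preimage_mem_nhds (x := p.2) (by simpa using hUnhds)]
        with s hs using hA _ hs
    have := hAy.deriv
    rw [Filter.EventuallyEq.deriv_eq hev] at this
    rw [← this, hcd₁.deriv]
  have hBeq : f'' (1, 0) (0, 1) = -(1 / Real.sinh (d₂ p) ^ 2) * fderiv ℝ d₂ p (1, 0) := by
    have hev : ∀ᶠ t in nhds p.1, fderiv ℝ l (t, p.2) (0, 1) = coth (d₂ (t, p.2)) := by
      have hc : Continuous (fun t : ℝ => (t, p.2)) := continuous_id.prodMk continuous_const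
      filter_upwards [hc.continuousAt.preimage_mem_nhds (x := p.1) (by simpa using hUnhds)]
        with t ht using hB _ ht
    have := hBx.deriv
    rw [Filter.EventuallyEq.deriv_eq hev] at this
    rw [← this, hcd₂.deriv]
  have key : -(1 / Real.sinh (d₁ p) ^ 2) * fderiv ℝ d₁ p (0, 1)
      = -(1 / Real.sinh (d₂ p) ^ 2) * fderiv ℝ d₂ p (1, 0) := by
    rw [← hAeq, ← hBeq, hsymm]
  rw [hd₁y.deriv, hd₂x.deriv]
  linarith
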